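/- Let α be a complete linear ordering and R an upward closed binary relation on α (meaning x ≤ x' < y' ≤ y and R(x',y') imply R(x,y)). Then there exists a subset γ ⊆ α such that for every x < y in α: (1) if R(x,y) then [x,y] ∩ γ is nonempty, and (2) if the open interval ]x,y[ contains two distinct elements of γ, then R(x,y). -/

import Mathlib

namespace UpwardClosedSelectionAux

variable {α : Type*} [LinearOrder α]

section Defs
variable (R : α → α → Prop)

/-- `PP u v` : every open interval properly containing `[u,v]` satisfies `R`. -/
def PP (u v : α) : Prop := ∀ a b : α, a < u → v < b → R a b

/-- `s` is compatible (pair-wise) with every element of the finite set `V`. -/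
def OkP (V : Finset α) (s : α) : Prop :=
  ∀ v ∈ V, (v < s → PP R v s) ∧ (s < v → PP R s v)

/-- The invariant of the greedy process:  `V` is the set of already chosen points,
`θ` is the current processing threshold (all demands with right end `≤ θ` are still serviceable). -/
def GState (θ : α) (V : Finset α) : Prop :=
  (∀ v ∈ V, ∀ w ∈ V, v < w → PP R v w) ∧
  (∀ v ∈ V, θ ≤ v ∨ ∃ w ∈ V, v < w ∧ ∀ s, v < s → s < w → s ≤ θ → ¬ PP R s w) ∧
  (∀ x y : α, x < y → R x y → y ≤ θ → ∃ s, x ≤ s ∧ s ≤ y ∧ OkP R V s)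

end Defs

variable {R : α → α → Prop}

theorem pp_mono {u v u' v' : α} (h : PP R u v) (h1 : u' ≤ u) (h2 : v ≤ v') : PP R u' v' :=
  fun a b ha hb => h a b (lt_of_lt_of_le ha h1) (lt_of_le_of_lt h2 hb)

theorem pp_outer (hup : ∀ x x' y' y : α, x ≤ x' → x' < y' → y' ≤ y → R x' y' → R x y)
    {x y u v : α} (hxy : x < y) (hR : R x y) (hu : u ≤ x) (hv : y ≤ v) :
    PP R u v := fun a b ha hb =>
  hup a x y b (le_of_lt (lt_of_lt_of_le ha hu)) hxy (le_of_lt (lt_of_le_of_lt hv hb)) hR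

theorem exists_gt_of_lt_lub {S : Set α} {t a : α} (h : IsLUB S t) (ha : a < t) :
    ∃ s ∈ S, a < s := by
  by_contra hc
  push_neg at hc
  exact absurd (h.2 fun s hs => hc s hs) (not_le.mpr ha)

theorem pp_lub {S : Set α} {t v : α} (h : IsLUB S t) (hS : ∀ s ∈ S, PP R s v) :
    PP R t v := fun a b ha hb => by
  obtain ⟨s, hs, has⟩ := exists_gt_of_lt_lub h ha
  exact hS s hs a b has hb

theorem gstate_anti {θ θ' : α} {V : Finset α} (h : GState R θ V) (hle : θ' ≤ θ) :
    GState R θ' V := by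
  obtain ⟨h1, h2, h3⟩ := h
  refine ⟨h1, fun v hv => ?_, fun x y hx hy hb => h3 x y hx hy (le_trans hb hle)⟩
  rcases h2 v hv with h | ⟨w, hw1, hw2, hw3⟩
  · exact Or.inl (le_trans hle h)
  · exact Or.inr ⟨w, hw1, hw2, fun s a b c => hw3 s a b (le_trans c hle)⟩

theorem main_step
    (hSup : ∀ t : Set α, t.Nonempty → BddAbove t → ∃ l, IsLUB t l)
    (hup : ∀ x x' y' y : α, x ≤ x' → x' < y' → y' ≤ y → R x' y' → R x y)
    {θ xd yd : α} {V : Finset α}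
    (hst : GState R θ V) (hxy : xd < yd) (hRd : R xd yd) (hθ : yd ≤ θ) :
    ∃ t, xd ≤ t ∧ t ≤ yd ∧ OkP R V t ∧ GState R yd (insert t V) := by
  classical
  obtain ⟨hPair, hCap, hCov⟩ := hst
  set S0 : Set α := {s | xd ≤ s ∧ s ≤ yd ∧ OkP R V s} with hS0def
  obtain ⟨s0, hs01, hs02, hs03⟩ := hCov xd yd hxy hRd hθ
  have hS0ne : S0.Nonempty := ⟨s0, hs01, hs02, hs03⟩
  have hS0bdd : BddAbove S0 := ⟨yd, fun s hs => hs.2.1⟩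
  obtain ⟨t, htlub⟩ := hSup S0 hS0ne hS0bdd
  have htub : ∀ s ∈ S0, s ≤ t := fun s hs => htlub.1 hs
  have htyd : t ≤ yd := htlub.2 fun s hs => hs.2.1
  have hxt : xd ≤ t := le_trans hs01 (htub s0 ⟨hs01, hs02, hs03⟩)
  have hokt : OkP R V t := by
    intro v hv
    constructor
    · intro hvt a b ha hb
      obtain ⟨s, hsS, hvs⟩ := exists_gt_of_lt_lub htlub hvt
      exact (hsS.2.2 v hv).1 hvs a b ha (lt_of_le_of_lt (htub s hsS) hb)
    · intro htv a b ha hb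
      obtain ⟨s, hsS, has⟩ := exists_gt_of_lt_lub htlub ha
      exact (hsS.2.2 v hv).2 (lt_of_le_of_lt (htub s hsS) htv) a b has hb
  refine ⟨t, hxt, htyd, hokt, ?_⟩
  by_cases htV : t ∈ V
  · rw [Finset.insert_eq_self.mpr htV]
    exact gstate_anti ⟨hPair, hCap, hCov⟩ hθ
  -- t ∉ V
  have hPair' : ∀ v ∈ insert t V, ∀ w ∈ insert t V, v < w → PP R v w := by
    intro v hv w hw hvw
    rcases Finset.mem_insert.mp hv with hveq | hv
    · subst v
      rcases Finset.mem_insert.mp hw with hweq | hw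
      · subst w; exact absurd hvw (lt_irrefl _)
      · exact (hokt w hw).2 hvw
    · rcases Finset.mem_insert.mp hw with hweq | hw
      · subst w; exact (hokt v hv).1 hvw
      · exact hPair v hv w hw hvw
  refine ⟨hPair', ?_, ?_⟩
  · -- cap condition
    intro v hv
    rcases Finset.mem_insert.mp hv with hveq | hv
    · subst v
      by_cases hyt : yd ≤ t
      · exact Or.inl hyt
      · push_neg at hyt
        have hVgt : (V.filter fun u => t < u).Nonempty := by
          by_contra hemp
          rw [Finset.not_nonempty_iff_eq_empty] at hemp
          have hlt : ∀ u ∈ V, u < t := by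
            intro u huV
            rcases lt_trichotomy u t with h | h | h
            · exact h
            · exact absurd (h ▸ huV) htV
            · exact absurd (Finset.mem_filter.mpr ⟨huV, h⟩) (by simp [hemp])
          have hydS : yd ∈ S0 := by
            refine ⟨le_of_lt hxy, le_refl _, ?_⟩
            intro u huV
            refine ⟨fun _ => pp_mono ((hokt u huV).1 (hlt u huV)) le_rfl (le_of_lt hyt),
              fun hc => absurd hc (not_lt.mpr (le_of_lt (lt_trans (hlt u huV) hyt)))⟩
          exact absurd (htub yd hydS) (not_le.mpr hyt)
        have hwmem := (V.filter fun u => t < u).min'_mem hVgt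
        set w := (V.filter fun u => t < u).min' hVgt with hwdef
        have hwV : w ∈ V := (Finset.mem_filter.mp hwmem).1
        have htw : t < w := (Finset.mem_filter.mp hwmem).2
        refine Or.inr ⟨w, Finset.mem_insert_of_mem hwV, htw, ?_⟩
        intro s hts hsw hsyd hPsw
        have hsS : s ∈ S0 := by
          refine ⟨le_trans hxt (le_of_lt hts), hsyd, ?_⟩
          intro u huV
          constructor
          · intro hus
            have hut : u < t := by
              rcases lt_trichotomy u t with h | h | h
              · exact h
              · exact absurd (h ▸ huV) htV
              · have : w ≤ u := Finset.min'_le (V.filter fun u => t < u) u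
                  (Finset.mem_filter.mpr ⟨huV, h⟩)
                exact absurd (lt_trans hus hsw) (not_lt.mpr this)
            exact pp_mono ((hokt u huV).1 hut) le_rfl (le_of_lt hts)
          · intro hsu
            have hwu : w ≤ u := Finset.min'_le (V.filter fun u => t < u) u
              (Finset.mem_filter.mpr ⟨huV, lt_trans hts hsu⟩)
            exact pp_mono hPsw le_rfl hwu
        exact absurd hts (not_lt.mpr (htub s hsS))
    · rcases hCap v hv with h | ⟨w, hwV, hvw, hcond⟩
      · exact Or.inl (le_trans hθ h)
      · exact Or.inr ⟨w, Finset.mem_insert_of_mem hwV, hvw,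
          fun s h1 h2 h3 => hcond s h1 h2 (le_trans h3 hθ)⟩
  · -- coverage condition
    intro xf yf hxyf hRf hyf
    by_cases hre : ∃ v ∈ insert t V, xf ≤ v ∧ v ≤ yf
    · obtain ⟨v, hv, hv1, hv2⟩ := hre
      exact ⟨v, hv1, hv2, fun v' hv' =>
        ⟨fun h => hPair' v' hv' v hv h, fun h => hPair' v hv v' hv' h⟩⟩
    · push_neg at hre
      have hsplit : ∀ v ∈ insert t V, v < xf ∨ yf < v := by
        intro v hv
        rcases lt_or_ge v xf with h | h
        · exact Or.inl h
        · exact Or.inr (hre v hv h)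
      rcases hsplit t (Finset.mem_insert_self t V) with htxf | htyf
      · -- CASE II : t < xf
        by_cases hIIa : ∃ v ∈ V, t < v ∧ v < xf
        · obtain ⟨v1, hv1V, htv1, hv1xf⟩ := hIIa
          obtain ⟨s0', h1, h2, h3⟩ := hCov xf yf hxyf hRf (le_trans hyf hθ)
          refine ⟨s0', h1, h2, ?_⟩
          intro v' hv'
          rcases Finset.mem_insert.mp hv' with hveq | hv'
          · subst v'
            refine ⟨fun _ => pp_mono ((hokt v1 hv1V).2 htv1) le_rfl
              (le_trans (le_of_lt hv1xf) h1), fun h => ?_⟩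
            exact absurd h (not_lt.mpr (le_trans (le_of_lt htxf) h1))
          · exact h3 v' hv'
        · -- II-b
          push_neg at hIIa
          by_cases hB1 : ∃ v ∈ insert t V, yf < v
          · -- impossible: build a viable point above t, contradicting that t is the lub
            exfalso
            obtain ⟨v0, hv0, hv0yf⟩ := hB1
            have hWne : ((insert t V).filter fun u => yf < u).Nonempty :=
              ⟨v0, Finset.mem_filter.mpr ⟨hv0, hv0yf⟩⟩
            set vp := ((insert t V).filter fun u => yf < u).min' hWne with hvpdef
            have hvpmem := ((insert t V).filter fun u => yf < u).min'_mem hWne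
            have hvp1 : vp ∈ insert t V := (Finset.mem_filter.mp hvpmem).1
            have hvp2 : yf < vp := (Finset.mem_filter.mp hvpmem).2
            set Sx : Set α := {s | xf ≤ s ∧ s ≤ yf ∧ PP R s vp} with hSxdef
            have hxmem : xf ∈ Sx :=
              ⟨le_rfl, le_of_lt hxyf, pp_outer hup hxyf hRf le_rfl (le_of_lt hvp2)⟩
            obtain ⟨sst, hlub⟩ := hSup Sx ⟨xf, hxmem⟩ ⟨yf, fun s hs => hs.2.1⟩
            have h1 : xf ≤ sst := hlub.1 hxmem
            have h2 : sst ≤ yf := hlub.2 fun s hs => hs.2.1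
            have hPsvp : PP R sst vp := pp_lub hlub fun s hs => hs.2.2
            have hmem : sst ∈ S0 := by
              refine ⟨le_trans hxt (le_trans (le_of_lt htxf) h1), le_trans h2 hyf, ?_⟩
              intro u huV
              constructor
              · intro hus
                have hut : u < t := by
                  rcases lt_or_ge u xf with h | h
                  · rcases lt_trichotomy u t with h' | h' | h'
                    · exact h'
                    · exact absurd (h' ▸ huV) htV
                    · exact absurd (hIIa u huV h') (not_le.mpr h)
                  · rcases hsplit u (Finset.mem_insert_of_mem huV) with h' | h'
                    · exact absurd h (not_le.mpr h')
                    · exact absurd (lt_of_lt_of_le h' (le_trans (le_of_lt hus) h2))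
                        (lt_irrefl yf)
                exact pp_mono ((hokt u huV).1 hut) le_rfl (le_trans (le_of_lt htxf) h1)
              · intro hsu
                have hyfu : yf < u := by
                  rcases hsplit u (Finset.mem_insert_of_mem huV) with h' | h'
                  · exact absurd (lt_of_le_of_lt h1 hsu) (not_lt.mpr (le_of_lt h'))
                  · exact h'
                have hvpu : vp ≤ u := Finset.min'_le ((insert t V).filter fun u => yf < u) u
                  (Finset.mem_filter.mpr ⟨Finset.mem_insert_of_mem huV, hyfu⟩)
                exact pp_mono hPsvp le_rfl hvpu
            exact absurd (htub sst hmem) (not_le.mpr (lt_of_lt_of_le htxf h1))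
          · -- no element above yf : take s := yf
            push_neg at hB1
            refine ⟨yf, le_of_lt hxyf, le_rfl, ?_⟩
            intro v hv
            have hvxf : v < xf := by
              rcases hsplit v hv with h | h
              · exact h
              · exact absurd h (not_lt.mpr (hB1 v hv))
            exact ⟨fun _ => pp_outer hup hxyf hRf (le_of_lt hvxf) le_rfl,
              fun h => absurd h (not_lt.mpr (le_of_lt (lt_trans hvxf hxyf)))⟩
      · -- CASE III : yf < t
        by_cases hIIIa : ∃ v ∈ V, yf < v ∧ v < t
        · obtain ⟨v1, hv1V, hyfv1, hv1t⟩ := hIIIa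
          obtain ⟨s0', h1, h2, h3⟩ := hCov xf yf hxyf hRf (le_trans hyf hθ)
          refine ⟨s0', h1, h2, ?_⟩
          intro v' hv'
          rcases Finset.mem_insert.mp hv' with hveq | hv'
          · subst v'
            refine ⟨fun h => absurd h (not_lt.mpr (le_trans h2 (le_of_lt htyf))), fun _ => ?_⟩
            exact pp_mono ((h3 v1 hv1V).2 (lt_of_le_of_lt h2 hyfv1)) le_rfl (le_of_lt hv1t)
          · exact h3 v' hv'
        · push_neg at hIIIa
          by_cases hLeft : ∃ v ∈ V, v < xf
          · -- impossible: contradicts the cap invariant of the largest such v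
            exfalso
            have hLne : (V.filter fun u => u < xf).Nonempty := by
              obtain ⟨v, hv1, hv2⟩ := hLeft
              exact ⟨v, Finset.mem_filter.mpr ⟨hv1, hv2⟩⟩
            have hvmmem := (V.filter fun u => u < xf).max'_mem hLne
            set vm := (V.filter fun u => u < xf).max' hLne with hvmdef
            have hvmV : vm ∈ V := (Finset.mem_filter.mp hvmmem).1
            have hvmxf : vm < xf := (Finset.mem_filter.mp hvmmem).2
            rcases hCap vm hvmV with h | ⟨w, hwV, hvmw, hcond⟩
            · exact absurd (lt_of_lt_of_le (lt_of_lt_of_le (lt_trans hvmxf hxyf) hyf) hθ)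
                (not_lt.mpr h)
            · have hwxf : ¬ w < xf := fun hc =>
                absurd (Finset.le_max' (V.filter fun u => u < xf) w
                  (Finset.mem_filter.mpr ⟨hwV, hc⟩)) (not_le.mpr hvmw)
              have hwyf : yf < w := by
                rcases hsplit w (Finset.mem_insert_of_mem hwV) with h | h
                · exact absurd h hwxf
                · exact h
              have htw : t < w := by
                rcases lt_or_eq_of_le (hIIIa w hwV hwyf) with h | h
                · exact h
                · exact absurd (h ▸ hwV) htV
              have hvmt : vm < t := lt_trans (lt_trans hvmxf hxyf) htyf
              exact absurd ((hokt w hwV).2 htw) (hcond t hvmt htw (le_trans htyd hθ))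
          · -- no element of V below xf : direct construction against t
            push_neg at hLeft
            set Sx : Set α := {s | xf ≤ s ∧ s ≤ yf ∧ PP R s t} with hSxdef
            have hxmem : xf ∈ Sx :=
              ⟨le_rfl, le_of_lt hxyf, pp_outer hup hxyf hRf le_rfl (le_of_lt htyf)⟩
            obtain ⟨sst, hlub⟩ := hSup Sx ⟨xf, hxmem⟩ ⟨yf, fun s hs => hs.2.1⟩
            have h1 : xf ≤ sst := hlub.1 hxmem
            have h2 : sst ≤ yf := hlub.2 fun s hs => hs.2.1
            have hPst : PP R sst t := pp_lub hlub fun s hs => hs.2.2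
            refine ⟨sst, h1, h2, ?_⟩
            intro v' hv'
            rcases Finset.mem_insert.mp hv' with hveq | hv'
            · subst v'
              exact ⟨fun h => absurd h (not_lt.mpr (le_trans h2 (le_of_lt htyf))),
                fun _ => hPst⟩
            · have hyfv' : yf < v' := by
                rcases hsplit v' (Finset.mem_insert_of_mem hv') with h | h
                · exact absurd h (not_lt.mpr (hLeft v' hv'))
                · exact h
              have htv' : t < v' := by
                rcases lt_or_eq_of_le (hIIIa v' hv' hyfv') with h | h
                · exact h
                · exact absurd (h ▸ hv') htV
              refine ⟨fun h => absurd h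
                (not_lt.mpr (le_trans h2 (le_of_lt (lt_trans htyf htv')))), fun _ => ?_⟩
              exact pp_mono hPst le_rfl (le_of_lt htv')


theorem iter_step
    (hSup : ∀ t : Set α, t.Nonempty → BddAbove t → ∃ l, IsLUB t l)
    (hup : ∀ x x' y' y : α, x ≤ x' → x' < y' → y' ≤ y → R x' y' → R x y) :
    ∀ (n : ℕ) (F : Finset (α × α)), F.card = n →
      (∀ p ∈ F, p.1 < p.2 ∧ R p.1 p.2) →
      ∀ (θ : α) (V : Finset α), GState R θ V → (∀ p ∈ F, p.2 ≤ θ) →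
      ∃ φ : α × α → α,
        (∀ p ∈ F, p.1 ≤ φ p ∧ φ p ≤ p.2 ∧ OkP R V (φ p)) ∧
        (∀ p ∈ F, ∀ q ∈ F, φ p < φ q → PP R (φ p) (φ q)) := by
  classical
  intro n
  induction n with
  | zero =>
    intro F hF _ θ V _ _
    rw [Finset.card_eq_zero] at hF
    subst hF
    exact ⟨fun p => p.2, by simp, by simp⟩
  | succ n ih =>
    intro F hF hdem θ V hst hbound
    have hFne : F.Nonempty := by
      rw [← Finset.card_pos, hF]; exact Nat.succ_pos n
    obtain ⟨pm, hpmF, hpmmax⟩ := F.exists_max_image Prod.snd hFne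
    obtain ⟨hpm1, hpm2⟩ := hdem _ hpmF
    obtain ⟨t, ht1, ht2, ht3, hst'⟩ := main_step hSup hup hst hpm1 hpm2 (hbound _ hpmF)
    obtain ⟨φ', hφ'1, hφ'2⟩ := ih (F.erase pm)
      (by rw [Finset.card_erase_of_mem hpmF, hF]; rfl)
      (fun p hp => hdem p (Finset.mem_of_mem_erase hp)) pm.2 (insert t V) hst'
      (fun p hp => hpmmax p (Finset.mem_of_mem_erase hp))
    refine ⟨fun p => if p = pm then t else φ' p, ?_, ?_⟩
    · intro p hp
      by_cases h : p = pm
      · simp only [if_pos h]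
        rw [h]
        exact ⟨ht1, ht2, ht3⟩
      · simp only [if_neg h]
        obtain ⟨a1, a2, a3⟩ := hφ'1 p (Finset.mem_erase.mpr ⟨h, hp⟩)
        exact ⟨a1, a2, fun v hv => a3 v (Finset.mem_insert_of_mem hv)⟩
    · intro p hp q hq hlt
      by_cases h1 : p = pm <;> by_cases h2 : q = pm
      · simp only [if_pos h1, if_pos h2] at hlt; exact absurd hlt (lt_irrefl _)
      · simp only [if_pos h1, if_neg h2] at hlt ⊢
        exact ((hφ'1 q (Finset.mem_erase.mpr ⟨h2, hq⟩)).2.2 t (Finset.mem_insert_self t V)).1 hlt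
      · simp only [if_neg h1, if_pos h2] at hlt ⊢
        exact ((hφ'1 p (Finset.mem_erase.mpr ⟨h1, hp⟩)).2.2 t (Finset.mem_insert_self t V)).2 hlt
      · simp only [if_neg h1, if_neg h2] at hlt ⊢
        exact hφ'2 p (Finset.mem_erase.mpr ⟨h1, hp⟩) q (Finset.mem_erase.mpr ⟨h2, hq⟩) hlt

theorem finite_hall
    (hSup : ∀ t : Set α, t.Nonempty → BddAbove t → ∃ l, IsLUB t l)
    (hup : ∀ x x' y' y : α, x ≤ x' → x' < y' → y' ≤ y → R x' y' → R x y)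
    (F : Finset (α × α)) (hdem : ∀ p ∈ F, p.1 < p.2 ∧ R p.1 p.2) :
    ∃ φ : α × α → α,
      (∀ p ∈ F, p.1 ≤ φ p ∧ φ p ≤ p.2) ∧
      (∀ p ∈ F, ∀ q ∈ F, φ p < φ q → PP R (φ p) (φ q)) := by
  classical
  rcases F.eq_empty_or_nonempty with rfl | hne
  · exact ⟨fun p => p.2, by simp, by simp⟩
  · obtain ⟨pm, hpmF, hpmmax⟩ := F.exists_max_image Prod.snd hne
    have hst : GState R pm.2 (∅ : Finset α) := by
      refine ⟨by simp, by simp, ?_⟩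
      intro x y hxy _ _
      exact ⟨x, le_rfl, le_of_lt hxy, by simp [OkP]⟩
    obtain ⟨φ, h1, h2⟩ := iter_step hSup hup F.card F rfl hdem pm.2 ∅ hst
      (fun p hp => hpmmax p hp)
    exact ⟨φ, fun p hp => ⟨(h1 p hp).1, (h1 p hp).2.1⟩, h2⟩


@[reducible]
noncomputable def mkCCLO [Nonempty α]
    (hSup : ∀ t : Set α, t.Nonempty → BddAbove t → ∃ l, IsLUB t l)
    (hInf : ∀ t : Set α, t.Nonempty → BddBelow t → ∃ l, IsGLB t l) :
    ConditionallyCompleteLinearOrder α := by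
  classical
  exact
  { LinearOrder.toLattice with
    sSup := fun s =>
      if h : s.Nonempty ∧ BddAbove s then (hSup s h.1 h.2).choose else Classical.arbitrary α
    sInf := fun s =>
      if h : s.Nonempty ∧ BddBelow s then (hInf s h.1 h.2).choose else Classical.arbitrary α
    isLUB_csSup := by
      intro s hne hb
      have h : s.Nonempty ∧ BddAbove s := ⟨hne, hb⟩
      simp only [dif_pos h]
      exact (hSup s h.1 h.2).choose_spec
    isGLB_csInf := by
      intro s hne hb
      have h : s.Nonempty ∧ BddBelow s := ⟨hne, hb⟩
      simp only [dif_pos h]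
      exact (hInf s h.1 h.2).choose_spec
    le_total := le_total
    toDecidableLE := inferInstanceAs (DecidableLE α)
    toDecidableEq := inferInstanceAs (DecidableEq α)
    toDecidableLT := inferInstanceAs (DecidableLT α)
    compare := compare
    compare_eq_compareOfLessAndEq := fun a b => LinearOrder.compare_eq_compareOfLessAndEq a b
    csSup_of_not_bddAbove := by
      intro s H
      simp only [dif_neg (fun h : s.Nonempty ∧ BddAbove s => H h.2),
        dif_neg (fun h : (∅ : Set α).Nonempty ∧ BddAbove (∅ : Set α) =>
          Set.not_nonempty_empty h.1)]
    csInf_of_not_bddBelow := by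
      intro s H
      simp only [dif_neg (fun h : s.Nonempty ∧ BddBelow s => H h.2),
        dif_neg (fun h : (∅ : Set α).Nonempty ∧ BddBelow (∅ : Set α) =>
          Set.not_nonempty_empty h.1)] }

end UpwardClosedSelectionAux

theorem upward_closed_selection {α : Type*} [LinearOrder α]
    (hSup : ∀ t : Set α, t.Nonempty → BddAbove t → ∃ l, IsLUB t l)
    (hInf : ∀ t : Set α, t.Nonempty → BddBelow t → ∃ l, IsGLB t l)
    (R : α → α → Prop)
    (hup : ∀ x x' y' y : α, x ≤ x' → x' < y' → y' ≤ y → R x' y' → R x y) :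
    ∃ γ : Set α, ∀ x y : α, x < y →
      (R x y → ∃ z ∈ γ, x ≤ z ∧ z ≤ y) ∧
      ((∃ z ∈ γ, ∃ z' ∈ γ, x < z ∧ z < y ∧ x < z' ∧ z' < y ∧ z ≠ z') → R x y) := by
  classical
  open UpwardClosedSelectionAux in
  rcases isEmpty_or_nonempty α with hα | hα
  · exact ⟨∅, fun x _ _ => (hα.elim x)⟩
  letI : ConditionallyCompleteLinearOrder α := UpwardClosedSelectionAux.mkCCLO hSup hInf
  letI : TopologicalSpace α := Preorder.topology α
  haveI : OrderTopology α := ⟨rfl⟩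
  let D := {p : α × α // p.1 < p.2 ∧ R p.1 p.2}
  haveI : ∀ d : D, CompactSpace (Set.Icc d.val.1 d.val.2) := fun d =>
    isCompact_iff_compactSpace.mp isCompact_Icc
  let X := ∀ d : D, (Set.Icc d.val.1 d.val.2)
  have hcont : ∀ d : D, Continuous fun φ : X => (φ d : α) := fun d =>
    continuous_subtype_val.comp (continuous_apply d)
  let K : D × D → Set X := fun i =>
    {φ : X | (φ i.1 : α) < (φ i.2 : α) → UpwardClosedSelectionAux.PP R (φ i.1) (φ i.2)}
  have hKclosed : ∀ i, IsClosed (K i) := by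
    intro i
    have heq : K i = ({φ : X | (φ i.1 : α) < (φ i.2 : α)} ∩
        ⋃ (a : α) (b : α) (_ : ¬ R a b),
          {φ : X | a < (φ i.1 : α)} ∩ {φ : X | (φ i.2 : α) < b})ᶜ := by
      ext φ
      rw [Set.mem_compl_iff]
      constructor
      · intro h hmem
        obtain ⟨hlt, hbad⟩ := hmem
        simp only [Set.mem_iUnion, Set.mem_inter_iff, Set.mem_setOf_eq] at hbad hlt
        obtain ⟨a, b, hab, ha, hb⟩ := hbad
        exact hab (h hlt a b ha hb)
      · intro h hlt a b ha hb
        by_contra hab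
        refine h ⟨hlt, ?_⟩
        simp only [Set.mem_iUnion, Set.mem_inter_iff, Set.mem_setOf_eq]
        exact ⟨a, b, hab, ha, hb⟩
    rw [heq]
    refine IsOpen.isClosed_compl (IsOpen.inter (isOpen_lt (hcont i.1) (hcont i.2)) ?_)
    refine isOpen_iUnion fun a => isOpen_iUnion fun b => isOpen_iUnion fun _ => ?_
    exact IsOpen.inter (isOpen_lt continuous_const (hcont i.1))
      (isOpen_lt (hcont i.2) continuous_const)
  have hFIP : (Set.univ ∩ ⋂ i, K i).Nonempty := by
    rcases (Set.univ ∩ ⋂ i, K i).eq_empty_or_nonempty with hemp | h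
    · exfalso
      obtain ⟨u, hu⟩ := isCompact_univ.elim_finite_subfamily_closed K hKclosed hemp
      set F : Finset (α × α) :=
        (u.image fun i => (i.1 : D).val) ∪ (u.image fun i => (i.2 : D).val) with hFdef
      have hdem : ∀ p ∈ F, p.1 < p.2 ∧ R p.1 p.2 := by
        intro p hp
        rw [hFdef, Finset.mem_union] at hp
        rcases hp with hp | hp
        · obtain ⟨j, _, rfl⟩ := Finset.mem_image.mp hp
          exact j.1.2
        · obtain ⟨j, _, rfl⟩ := Finset.mem_image.mp hp
          exact j.2.2
      obtain ⟨φ₀, hφ₀1, hφ₀2⟩ := UpwardClosedSelectionAux.finite_hall hSup hup F hdem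
      let χ : X := fun d =>
        if h : d.val ∈ F then ⟨φ₀ d.val, (hφ₀1 d.val h).1, (hφ₀1 d.val h).2⟩
        else ⟨d.val.2, le_of_lt d.prop.1, le_rfl⟩
      have hχ : χ ∈ Set.univ ∩ ⋂ i ∈ u, K i := by
        refine ⟨Set.mem_univ _, ?_⟩
        rw [Set.mem_iInter₂]
        intro i hi
        have h1 : (i.1 : D).val ∈ F := by
          rw [hFdef, Finset.mem_union]
          exact Or.inl (Finset.mem_image.mpr ⟨i, hi, rfl⟩)
        have h2 : (i.2 : D).val ∈ F := by
          rw [hFdef, Finset.mem_union]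
          exact Or.inr (Finset.mem_image.mpr ⟨i, hi, rfl⟩)
        intro hlt
        have e1 : (χ i.1 : α) = φ₀ (i.1 : D).val := by simp only [χ, dif_pos h1]
        have e2 : (χ i.2 : α) = φ₀ (i.2 : D).val := by simp only [χ, dif_pos h2]
        rw [e1, e2] at hlt ⊢
        exact hφ₀2 _ h1 _ h2 hlt
      rw [hu] at hχ
      exact hχ
    · exact h
  obtain ⟨χ, -, hχ⟩ := hFIP
  rw [Set.mem_iInter] at hχ
  refine ⟨Set.range fun d : D => (χ d : α), ?_⟩
  intro x y hxy
  constructor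
  · intro hRxy
    refine ⟨(χ ⟨(x, y), hxy, hRxy⟩ : α), ⟨⟨(x, y), hxy, hRxy⟩, rfl⟩, ?_, ?_⟩
    · exact (χ ⟨(x, y), hxy, hRxy⟩).2.1
    · exact (χ ⟨(x, y), hxy, hRxy⟩).2.2
  · rintro ⟨z, ⟨d, rfl⟩, z', ⟨e, rfl⟩, h1, h2, h3, h4, hne⟩
    rcases hne.lt_or_gt with hlt | hlt
    · exact hχ (d, e) hlt x y h1 h4
    · exact hχ (e, d) hlt x y h3 h2
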